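/- For every point w = (t, q_0, …, q_{2k−1}) ∈ ℝ × (ℝⁿ)^{2k}, the Jacobian determinant of the restricted Legendre–Ostrogradsky map FL at w satisfies |det D(FL)(w)| = |det W(t, q_0, …, q_k)|^k, where W is the Hessian matrix of L in the variable q_k. -/

import Mathlib

open scoped ContDiff RealInnerProductSpace

noncomputable section

/-- `ℝⁿ` as a Euclidean space. -/
abbrev Evec (n : ℕ) := EuclideanSpace ℝ (Fin n)

/-- The partial gradient `∂f/∂q_i` of a function `f : ℝ × (ℝⁿ)^N → ℝ`
with respect to the variable `q_i`. -/
noncomputable def pgradN {n N : ℕ} (f : ℝ × (Fin N → Evec n) → ℝ)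
    (i : Fin N) (x : ℝ × (Fin N → Evec n)) : Evec n :=
  gradient (fun v => f (x.1, Function.update x.2 i v)) (x.2 i)

/-- The total time derivative `d_T f = ∂f/∂t + ∑_i q_{i+1} · ∂f/∂q_i` of a function
on `ℝ × (ℝⁿ)^N` (functions of `(t, q_0, …, q_m)` are regarded as functions on this
space, not depending on the higher variables, for which the extra terms vanish). -/
noncomputable def dT {n N : ℕ} {F : Type*} [NormedAddCommGroup F] [NormedSpace ℝ F]
    (f : ℝ × (Fin N → Evec n) → F) : ℝ × (Fin N → Evec n) → F :=
  fun x => deriv (fun s => f (s, x.2)) x.1 +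
    ∑ i : Fin N, if h : (i : ℕ) + 1 < N then
      fderiv ℝ (fun v => f (x.1, Function.update x.2 i v)) (x.2 i) (x.2 ⟨(i : ℕ)+1, h⟩)
    else 0

/-- A `k`-th order Lagrangian regarded as a function on `ℝ × (ℝⁿ)^N`, `k+1 ≤ N`. -/
def extendL {n k N : ℕ} (h : k + 1 ≤ N) (L : ℝ × (Fin (k+1) → Evec n) → ℝ) :
    ℝ × (Fin N → Evec n) → ℝ :=
  fun x => L (x.1, fun i => x.2 ⟨(i : ℕ), by have := i.isLt; omega⟩)

/-- The Jacobi–Ostrogradsky momentum function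
`p̂^{r-1} = ∑_{i=0}^{k-r} (-1)^i d_T^i (∂L/∂q_{r+i})`, as a function on `ℝ × (ℝⁿ)^N`. -/
noncomputable def hatP {n k N : ℕ} (h : k + 1 ≤ N) (L : ℝ × (Fin (k+1) → Evec n) → ℝ)
    (r : ℕ) (hr1 : 1 ≤ r) (hrk : r ≤ k) : ℝ × (Fin N → Evec n) → Evec n :=
  fun x => ∑ i : Fin (k - r + 1),
    ((-1:ℝ)^(i : ℕ)) •
      (dT^[(i : ℕ)] (pgradN (extendL h L) ⟨r + (i : ℕ), by have := i.isLt; omega⟩)) x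

/-- The Hessian matrix `W` of a `k`-th order Lagrangian with respect to the highest
velocity variable `q_k`: `W A B = ∂²L/∂q_k^B ∂q_k^A`. -/
noncomputable def hessQk {n k : ℕ} (L : ℝ × (Fin (k+1) → Evec n) → ℝ)
    (x : ℝ × (Fin (k+1) → Evec n)) : Matrix (Fin n) (Fin n) ℝ :=
  fun A B =>
    fderiv ℝ (fun v => gradient (fun w => L (x.1, Function.update x.2 (Fin.last k) w)) v A)
      (x.2 (Fin.last k)) (EuclideanSpace.single B 1)

/-- The restricted Legendre–Ostrogradsky map
`FL(t, q_0, …, q_{2k-1}) = (t, q_0, …, q_{k-1}, p̂^0, …, p̂^{k-1})`. -/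
noncomputable def legendreFL {n k : ℕ} (hk : 1 ≤ k) (L : ℝ × (Fin (k+1) → Evec n) → ℝ) :
    ℝ × (Fin (2*k) → Evec n) → ℝ × (Fin (2*k) → Evec n) :=
  fun x => (x.1, fun j => if h : (j : ℕ) < k then x.2 ⟨(j : ℕ), by omega⟩
    else hatP (by omega) L ((j : ℕ) - k + 1) (by omega)
      (by have := j.isLt; omega) x)

/-- Truncation of a point of `ℝ × (ℝⁿ)^{2k}` to a point of `ℝ × (ℝⁿ)^{k+1}`. -/
def truncK {n k : ℕ} (hk : 1 ≤ k) (w : ℝ × (Fin (2*k) → Evec n)) :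
    ℝ × (Fin (k+1) → Evec n) :=
  (w.1, fun i => w.2 ⟨(i : ℕ), by have := i.isLt; omega⟩)


set_option linter.unusedSectionVars false
set_option maxHeartbeats 1000000

namespace S3


variable {n N : ℕ} {F : Type*} [NormedAddCommGroup F] [NormedSpace ℝ F]

/-- The inclusion `u ↦ (0, Pi.single i u)` as a CLM. -/
def inc (n : ℕ) {N : ℕ} (i : Fin N) : Evec n →L[ℝ] ℝ × (Fin N → Evec n) :=
  (ContinuousLinearMap.inr ℝ ℝ _).comp
    (ContinuousLinearMap.pi (fun j => if j = i then ContinuousLinearMap.id ℝ (Evec n) else 0))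

@[simp] lemma inc_apply (i : Fin N) (u : Evec n) :
    inc n i u = (0, Pi.single i u) := by
  refine Prod.ext rfl (funext fun j => ?_)
  by_cases h : j = i
  · subst h; simp [inc]
  · simp [inc, h, Pi.single_apply]

/-- Projection onto the `i`-th vector coordinate. -/
def pr2 (n : ℕ) {N : ℕ} (i : Fin N) : (ℝ × (Fin N → Evec n)) →L[ℝ] Evec n :=
  (ContinuousLinearMap.proj i).comp (ContinuousLinearMap.snd ℝ _ _)

@[simp] lemma pr2_apply (i : Fin N) (x : ℝ × (Fin N → Evec n)) : pr2 n i x = x.2 i := rfl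

/-- Truncation CLM zeroing all vector variables of index `> m`. -/
def Pm (n : ℕ) {N : ℕ} (m : ℕ) : (ℝ × (Fin N → Evec n)) →L[ℝ] ℝ × (Fin N → Evec n) :=
  (ContinuousLinearMap.fst ℝ _ _).prod
    (ContinuousLinearMap.pi (fun i => if (i : ℕ) ≤ m then pr2 n i else 0))

@[simp] lemma Pm_apply (m : ℕ) (x : ℝ × (Fin N → Evec n)) :
    Pm n m x = (x.1, fun i : Fin N => if (i : ℕ) ≤ m then x.2 i else 0) := by
  refine Prod.ext rfl (funext fun i => ?_)
  by_cases h : (i : ℕ) ≤ m <;> simp [Pm, h, pr2]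

lemma Pm_Pm_of_le {m m' : ℕ} (h : m ≤ m') (x : ℝ × (Fin N → Evec n)) :
    Pm n m (Pm n m' x) = Pm n m x := by
  simp only [Pm_apply]
  refine Prod.ext rfl (funext fun i => ?_)
  by_cases h1 : (i : ℕ) ≤ m
  · simp [h1, h1.trans h]
  · simp [h1]

lemma Pm_Pm_of_le' {m m' : ℕ} (h : m ≤ m') (x : ℝ × (Fin N → Evec n)) :
    Pm n m' (Pm n m x) = Pm n m x := by
  simp only [Pm_apply]
  refine Prod.ext rfl (funext fun i => ?_)
  by_cases h1 : (i : ℕ) ≤ m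
  · simp [h1, h1.trans h]
  · simp [h1]

@[simp] lemma Pm_inc_of_le {m : ℕ} {i : Fin N} (h : (i : ℕ) ≤ m) (u : Evec n) :
    Pm n m (inc n i u) = inc n i u := by
  simp only [inc_apply, Pm_apply]
  refine Prod.ext rfl (funext fun j => ?_)
  by_cases h1 : (j : ℕ) ≤ m
  · simp [h1]
  · have : j ≠ i := by rintro rfl; exact h1 h
    simp [h1, Pi.single_apply, this]

@[simp] lemma Pm_inc_of_gt {m : ℕ} {i : Fin N} (h : m < (i : ℕ)) (u : Evec n) :
    Pm n m (inc n i u) = 0 := by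
  simp only [inc_apply, Pm_apply]
  refine Prod.ext rfl (funext fun j => ?_)
  by_cases h1 : (j : ℕ) ≤ m
  · have : j ≠ i := by rintro rfl; omega
    simp [h1, Pi.single_apply, this]
  · simp [h1]

@[simp] lemma Pm_t (m : ℕ) (s : ℝ) :
    Pm n m ((s, 0) : ℝ × (Fin N → Evec n)) = (s, 0) := by
  simp only [Pm_apply]
  refine Prod.ext rfl (funext fun j => ?_)
  by_cases h1 : (j : ℕ) ≤ m <;> simp [h1]

/-- `f` depends only on the time variable and the vector variables `q_0, …, q_m`. -/
def Dep (m : ℕ) (f : ℝ × (Fin N → Evec n) → F) : Prop :=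
  ∀ x, f x = f (Pm n m x)

lemma Dep.mono {m m' : ℕ} {f : ℝ × (Fin N → Evec n) → F} (hf : Dep m f) (h : m ≤ m') :
    Dep m' f := fun x => by
  rw [hf x, hf (Pm n m' x), Pm_Pm_of_le h]

lemma Dep.fderiv_eq {m : ℕ} {f : ℝ × (Fin N → Evec n) → F}
    (hd : Differentiable ℝ f) (hf : Dep m f) (x : ℝ × (Fin N → Evec n)) :
    fderiv ℝ f x = (fderiv ℝ f (Pm n m x)).comp (Pm n m) := by
  have hfe : f = fun y => f (Pm n m y) := funext hf
  conv_lhs => rw [hfe]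
  exact ((hd (Pm n m x)).hasFDerivAt.comp x ((Pm n m).hasFDerivAt)).fderiv


section Rewrites

variable {n N : ℕ} {F : Type*} [NormedAddCommGroup F] [NormedSpace ℝ F]
variable {f : ℝ × (Fin N → Evec n) → F} {g : ℝ × (Fin N → Evec n) → ℝ}

/-- The section `v ↦ (x.1, update x.2 i v)` is affine with derivative `inc n i`. -/
lemma hasFDerivAt_sect (x : ℝ × (Fin N → Evec n)) (i : Fin N) (v : Evec n) :
    HasFDerivAt (fun v => (x.1, Function.update x.2 i v)) (inc n i) v := by
  have he : (fun v : Evec n => (x.1, Function.update x.2 i v)) =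
      fun v => ((x.1, x.2 - Pi.single i (x.2 i)) : ℝ × (Fin N → Evec n)) + inc n i v := by
    funext v
    refine Prod.ext (by simp) (funext fun j => ?_)
    by_cases h : j = i
    · subst h; simp [Function.update_self]
    · simp [Function.update_of_ne h, Pi.single_apply, h]
  rw [he]
  exact (inc n i).hasFDerivAt.const_add _

lemma fderiv_sect (hf : DifferentiableAt ℝ f x) (i : Fin N) :
    fderiv ℝ (fun v => f (x.1, Function.update x.2 i v)) (x.2 i) =
      (fderiv ℝ f x).comp (inc n i) := by
  have h1 := hasFDerivAt_sect (n := n) x i (x.2 i)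
  have h2 : HasFDerivAt f (fderiv ℝ f x) ((fun v => (x.1, Function.update x.2 i v)) (x.2 i)) := by
    simpa [Function.update_eq_self] using hf.hasFDerivAt
  exact (h2.comp (x.2 i) h1).fderiv

lemma deriv_slice (hf : DifferentiableAt ℝ f x) :
    deriv (fun s => f (s, x.2)) x.1 = fderiv ℝ f x (1, 0) := by
  have h1 : HasDerivAt (fun s : ℝ => ((s, x.2) : ℝ × (Fin N → Evec n))) (1, 0) x.1 :=
    (hasDerivAt_id x.1).prodMk (hasDerivAt_const _ _)
  have h2 : HasFDerivAt f (fderiv ℝ f x) ((fun s : ℝ => ((s, x.2) : ℝ × (Fin N → Evec n))) x.1) := by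
    simpa using hf.hasFDerivAt
  exact (h2.comp_hasDerivAt x.1 h1).deriv

lemma dT_eq (hf : Differentiable ℝ f) (x : ℝ × (Fin N → Evec n)) :
    dT f x = fderiv ℝ f x (1, 0) +
      ∑ i : Fin N, (if h : (i : ℕ) + 1 < N then
        fderiv ℝ f x (inc n i (x.2 ⟨(i : ℕ)+1, h⟩)) else 0) := by
  rw [dT, deriv_slice (hf x)]
  congr 1
  refine Finset.sum_congr rfl fun i _ => ?_
  by_cases h : (i : ℕ) + 1 < N
  · rw [dif_pos h, dif_pos h, fderiv_sect (hf x) i]; rfl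
  · rw [dif_neg h, dif_neg h]

lemma contDiff_fderiv (hf : ContDiff ℝ ∞ f) : ContDiff ℝ ∞ (fderiv ℝ f) :=
  hf.fderiv_right (by simp)

lemma contDiff_dT (hf : ContDiff ℝ ∞ f) : ContDiff ℝ ∞ (dT f) := by
  have he : dT f = fun x => fderiv ℝ f x (1, 0) +
      ∑ i : Fin N, (if h : (i : ℕ) + 1 < N then
        fderiv ℝ f x (inc n i (x.2 ⟨(i : ℕ)+1, h⟩)) else 0) :=
    funext (dT_eq (hf.differentiable (by simp)))
  rw [he]
  refine ((contDiff_fderiv hf).clm_apply contDiff_const).add ?_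
  refine ContDiff.sum fun i _ => ?_
  by_cases h : (i : ℕ) + 1 < N
  · simp only [dif_pos h]
    exact (contDiff_fderiv hf).clm_apply
      ((inc n i).contDiff.comp ((pr2 n ⟨(i : ℕ)+1, h⟩).contDiff))
  · simp only [dif_neg h]; exact contDiff_const

/-- `pgradN` rewritten via `fderiv` and coordinates. -/
def pg (f : ℝ × (Fin N → Evec n) → ℝ) (i : Fin N) (x : ℝ × (Fin N → Evec n)) : Evec n :=
  (WithLp.equiv 2 _).symm (fun A : Fin n => fderiv ℝ f x (inc n i (EuclideanSpace.single A 1)))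

lemma pg_apply (f : ℝ × (Fin N → Evec n) → ℝ) (i : Fin N) (x : ℝ × (Fin N → Evec n)) (A : Fin n) :
    pg f i x A = fderiv ℝ f x (inc n i (EuclideanSpace.single A 1)) := rfl

lemma pgradN_eq (hg : Differentiable ℝ g) (i : Fin N) : pgradN g i = pg g i := by
  funext x
  have h1 : (fun v => g (x.1, Function.update x.2 i v)) =
      g ∘ (fun v => (x.1, Function.update x.2 i v)) := rfl
  refine PiLp.ext fun A => ?_
  have hA : (gradient (fun v => g (x.1, Function.update x.2 i v)) (x.2 i)) A =
      ⟪gradient (fun v => g (x.1, Function.update x.2 i v)) (x.2 i),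
        EuclideanSpace.single A 1⟫ := by
    rw [EuclideanSpace.inner_single_right]; simp
  show (gradient (fun v => g (x.1, Function.update x.2 i v)) (x.2 i)) A = _
  rw [hA, gradient, InnerProductSpace.toDual_symm_apply, fderiv_sect (hg x) i, pg_apply]
  rfl

lemma contDiff_pg (hg : ContDiff ℝ ∞ g) (i : Fin N) : ContDiff ℝ ∞ (pg g i) := by
  have : pg g i = (fun y : Fin n → ℝ => (WithLp.equiv 2 _).symm y) ∘
      (fun x (A : Fin n) => fderiv ℝ g x (inc n i (EuclideanSpace.single A 1))) := rfl
  rw [this]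
  refine ContDiff.comp ?_ (contDiff_pi.2 fun A => (contDiff_fderiv hg).clm_apply contDiff_const)
  exact (PiLp.continuousLinearEquiv 2 ℝ (fun _ : Fin n => ℝ)).symm.contDiff

end Rewrites

section Key

variable {n N : ℕ} {F : Type*} [NormedAddCommGroup F] [NormedSpace ℝ F]
variable {f : ℝ × (Fin N → Evec n) → F}

lemma Dep.fderiv_inc_zero {m : ℕ} {g : ℝ × (Fin N → Evec n) → F}
    (hd : Differentiable ℝ g) (hg : Dep m g) {j : Fin N} (h : m < (j : ℕ))
    (x : ℝ × (Fin N → Evec n)) (u : Evec n) :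
    fderiv ℝ g x (inc n j u) = 0 := by
  rw [hg.fderiv_eq hd x, ContinuousLinearMap.comp_apply, Pm_inc_of_gt h, map_zero]

lemma step {m : ℕ} (hf : ContDiff ℝ ∞ f) (hm : Dep m f) (hm1 : m + 1 < N) :
    Dep (m+1) (dT f) ∧
      ∀ x u, fderiv ℝ (dT f) x (inc n ⟨m+1, hm1⟩ u) =
        fderiv ℝ f (Pm n m x) (inc n ⟨m, by omega⟩ u) := by
  classical
  have hd : Differentiable ℝ f := hf.differentiable (by simp)
  set c : ℝ × (Fin N → Evec n) → Evec n →L[ℝ] F := fun x =>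
    ((ContinuousLinearMap.compL ℝ (Evec n) (ℝ × (Fin N → Evec n)) F).flip
      (inc n ⟨m, by omega⟩)) (fderiv ℝ f (Pm n m x)) with hc_def
  have hc_smooth : ContDiff ℝ ∞ c :=
    (ContinuousLinearMap.contDiff _).comp ((contDiff_fderiv hf).comp (Pm n m).contDiff)
  have hc_dep : Dep m c := fun x => by
    simp only [hc_def, Pm_Pm_of_le (le_refl m)]
  set H : ℝ × (Fin N → Evec n) → F := fun x =>
    fderiv ℝ f (Pm n m x) (1, 0) +
      ∑ i : Fin N, (if h : (i : ℕ) < m ∧ (i : ℕ) + 1 < N then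
        fderiv ℝ f (Pm n m x) (inc n i (x.2 ⟨(i : ℕ)+1, h.2⟩)) else 0) with hH_def
  have hH_smooth : ContDiff ℝ ∞ H := by
    refine (((contDiff_fderiv hf).comp (Pm n m).contDiff).clm_apply contDiff_const).add ?_
    refine ContDiff.sum fun i _ => ?_
    by_cases h : (i : ℕ) < m ∧ (i : ℕ) + 1 < N
    · simp only [dif_pos h]
      exact ((contDiff_fderiv hf).comp (Pm n m).contDiff).clm_apply
        ((inc n i).contDiff.comp ((pr2 n ⟨(i : ℕ)+1, h.2⟩).contDiff))
    · simp only [dif_neg h]; exact contDiff_const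
  have hH_dep : Dep m H := fun x => by
    simp only [hH_def, Pm_Pm_of_le (le_refl m)]
    congr 1
    refine Finset.sum_congr rfl fun i _ => ?_
    by_cases h : (i : ℕ) < m ∧ (i : ℕ) + 1 < N
    · simp only [dif_pos h, Pm_apply]
      have : ((⟨(i : ℕ)+1, h.2⟩ : Fin N) : ℕ) ≤ m := by
        simp only [Fin.val_mk]; omega
      simp [this]
    · simp only [dif_neg h]
  have hsplit : ∀ x, dT f x = H x + c x (x.2 ⟨m+1, hm1⟩) := by
    intro x
    rw [dT_eq hd x, hm.fderiv_eq hd x]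
    have h10 : Pm n m ((1:ℝ), (0 : Fin N → Evec n)) = (1, 0) := Pm_t m 1
    simp only [ContinuousLinearMap.comp_apply, hH_def, hc_def]
    rw [h10]
    have hsum : ∀ i : Fin N,
        (if h : (i : ℕ) + 1 < N then
          fderiv ℝ f (Pm n m x) (Pm n m (inc n i (x.2 ⟨(i : ℕ)+1, h⟩))) else 0) =
        (if h : (i : ℕ) < m ∧ (i : ℕ) + 1 < N then
          fderiv ℝ f (Pm n m x) (inc n i (x.2 ⟨(i : ℕ)+1, h.2⟩)) else 0) +
        (if h : (i : ℕ) = m then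
          fderiv ℝ f (Pm n m x) (inc n i (x.2 ⟨m+1, hm1⟩)) else 0) := by
      intro i
      by_cases h1 : (i : ℕ) + 1 < N
      · rw [dif_pos h1]
        rcases lt_trichotomy (i : ℕ) m with h2 | h2 | h2
        · rw [dif_pos ⟨h2, h1⟩, dif_neg (by omega)]
          rw [Pm_inc_of_le (by omega)]
          simp
        · rw [dif_neg (by omega), dif_pos h2]
          rw [Pm_inc_of_le (by omega)]
          have : (⟨(i:ℕ)+1, h1⟩ : Fin N) = ⟨m+1, hm1⟩ := by simp [h2]
          rw [this]
          simp
        · rw [dif_neg (by omega), dif_neg (by omega), Pm_inc_of_gt h2]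
          simp
      · have h2 : ¬((i : ℕ) < m ∧ (i : ℕ) + 1 < N) := by tauto
        have h3 : (i : ℕ) ≠ m := by omega
        rw [dif_neg h1, dif_neg h2, dif_neg h3]
        simp
    rw [Finset.sum_congr rfl (fun i _ => hsum i), Finset.sum_add_distrib]
    have : (∑ i : Fin N, if h : (i : ℕ) = m then
        fderiv ℝ f (Pm n m x) (inc n i (x.2 ⟨m+1, hm1⟩)) else 0) =
        fderiv ℝ f (Pm n m x) (inc n ⟨m, by omega⟩ (x.2 ⟨m+1, hm1⟩)) := by
      rw [Finset.sum_eq_single (⟨m, by omega⟩ : Fin N)]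
      · simp
      · intro b _ hb
        have : (b : ℕ) ≠ m := fun h => hb (by ext; simp [h])
        simp [this]
      · simp
    rw [this]
    abel
  constructor
  · intro x
    rw [hsplit x, hsplit (Pm n (m+1) x)]
    have hc2 : c (Pm n (m+1) x) = c x := by
      rw [hc_dep x, hc_dep (Pm n (m+1) x), Pm_Pm_of_le (by omega : m ≤ m+1)]
    have hH2 : H (Pm n (m+1) x) = H x := by
      rw [hH_dep x, hH_dep (Pm n (m+1) x), Pm_Pm_of_le (by omega : m ≤ m+1)]
    have hx2 : (Pm n (m+1) x).2 ⟨m+1, hm1⟩ = x.2 ⟨m+1, hm1⟩ := by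
      rw [Pm_apply]; simp
    rw [hc2, hH2, hx2]
  · intro x u
    have hfe : dT f = fun x => c x (x.2 ⟨m+1, hm1⟩) + H x := by
      funext y; rw [hsplit y]; abel
    have hB : HasFDerivAt (fun x : ℝ × (Fin N → Evec n) => c x (x.2 ⟨m+1, hm1⟩))
        ((c x).comp (pr2 n ⟨m+1, hm1⟩) +
          (fderiv ℝ c x).flip (x.2 ⟨m+1, hm1⟩)) x := by
      exact ((hc_smooth.differentiable (by simp) x).hasFDerivAt).clm_apply
        ((pr2 n ⟨m+1, hm1⟩).hasFDerivAt)
    have hH' : HasFDerivAt H (fderiv ℝ H x) x :=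
      (hH_smooth.differentiable (by simp) x).hasFDerivAt
    have : HasFDerivAt (dT f)
        (((c x).comp (pr2 n ⟨m+1, hm1⟩) + (fderiv ℝ c x).flip (x.2 ⟨m+1, hm1⟩)) +
          fderiv ℝ H x) x := by
      rw [hfe]; exact hB.add hH'
    rw [this.fderiv]
    have e1 : fderiv ℝ H x (inc n ⟨m+1, hm1⟩ u) = 0 :=
      hH_dep.fderiv_inc_zero (hH_smooth.differentiable (by simp)) (by simp) x u
    have e2 : fderiv ℝ c x (inc n ⟨m+1, hm1⟩ u) = 0 :=
      hc_dep.fderiv_inc_zero (hc_smooth.differentiable (by simp)) (by simp) x u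
    simp only [ContinuousLinearMap.add_apply, ContinuousLinearMap.comp_apply,
      ContinuousLinearMap.flip_apply, e1, e2]
    have e3 : pr2 n ⟨m+1, hm1⟩ (inc n ⟨m+1, hm1⟩ u) = u := by
      simp
    rw [e3]
    have e4 : c x u = fderiv ℝ f (Pm n m x) (inc n ⟨m, by omega⟩ u) := rfl
    rw [e4]
    simp

end Key

section Iter

variable {n N : ℕ} {F : Type*} [NormedAddCommGroup F] [NormedSpace ℝ F]
variable {f : ℝ × (Fin N → Evec n) → F}

lemma iter {m : ℕ} (hf : ContDiff ℝ ∞ f) (hm : Dep m f) :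
    ∀ (i : ℕ) (h : m + i < N), ContDiff ℝ ∞ (dT^[i] f) ∧ Dep (m+i) (dT^[i] f) ∧
      ∀ x u, fderiv ℝ (dT^[i] f) x (inc n ⟨m+i, h⟩ u) =
        fderiv ℝ f (Pm n m x) (inc n ⟨m, by omega⟩ u) := by
  intro i
  induction i with
  | zero =>
    intro h
    refine ⟨by simpa using hf, by simpa using hm, fun x u => ?_⟩
    simp only [Function.iterate_zero, id_eq]
    rw [hm.fderiv_eq (hf.differentiable (by simp)) x, ContinuousLinearMap.comp_apply]
    congr 1
    exact Pm_inc_of_le (by simp) u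
  | succ i ih =>
    intro h
    have hi : m + i < N := by omega
    obtain ⟨hs, hdep, htop⟩ := ih hi
    have hit : dT^[i+1] f = dT (dT^[i] f) := Function.iterate_succ_apply' dT i f
    have hstep := step (f := dT^[i] f) hs hdep (show (m+i)+1 < N by omega)
    refine ⟨?_, ?_, ?_⟩
    · rw [hit]; exact contDiff_dT hs
    · rw [hit]
      have : m + (i+1) = (m+i) + 1 := rfl
      rw [this]
      exact hstep.1
    · intro x u
      rw [hit]
      have e1 : (⟨m+(i+1), h⟩ : Fin N) = ⟨(m+i)+1, by omega⟩ := rfl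
      rw [e1, hstep.2 x u]
      have e2 := htop (Pm n (m+i) x) u
      rw [e2, Pm_Pm_of_le (by omega : m ≤ m + i)]

end Iter

section SecondDeriv

variable {n N : ℕ} {F : Type*} [NormedAddCommGroup F] [NormedSpace ℝ F]

/-- Coordinate extraction on `Evec n` as a CLM. -/
def coordC (n : ℕ) (A : Fin n) : Evec n →L[ℝ] ℝ :=
  (ContinuousLinearMap.proj A).comp
    (PiLp.continuousLinearEquiv 2 ℝ (fun _ : Fin n => ℝ) : Evec n →L[ℝ] (Fin n → ℝ))

@[simp] lemma coordC_apply (A : Fin n) (y : Evec n) : coordC n A y = y A := rfl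

/-- `fderiv` commutes with applying a CLM-valued function at a fixed vector. -/
lemma fderiv_clm_apply_const {E : Type*} [NormedAddCommGroup E] [NormedSpace ℝ E]
    {g : E → E →L[ℝ] F} (hg : Differentiable ℝ g) (y d c : E) :
    fderiv ℝ (fun x => g x c) y d = (fderiv ℝ g y d) c := by
  have h1 : (fun x => g x c) = (ContinuousLinearMap.apply ℝ F c) ∘ g := rfl
  rw [h1, ((ContinuousLinearMap.apply ℝ F c).hasFDerivAt.comp y (hg y).hasFDerivAt).fderiv]
  rfl

/-- `fderiv` commutes with coordinate extraction. -/
lemma fderiv_coord {E : Type*} [NormedAddCommGroup E] [NormedSpace ℝ E]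
    {g : E → Evec n} (hg : Differentiable ℝ g) (y d : E) (A : Fin n) :
    fderiv ℝ (fun x => g x A) y d = (fderiv ℝ g y d) A := by
  have h1 : (fun x => g x A) = (coordC n A) ∘ g := rfl
  rw [h1, ((coordC n A).hasFDerivAt.comp y (hg y).hasFDerivAt).fderiv]
  rfl

end SecondDeriv

section HatPAnalysis

variable {n k : ℕ}

/-- Truncation CLM from `ℝ × (ℝⁿ)^{2k}` to `ℝ × (ℝⁿ)^{k+1}`. -/
def trC (n k : ℕ) (h : k + 1 ≤ 2*k) : (ℝ × (Fin (2*k) → Evec n)) →L[ℝ] (ℝ × (Fin (k+1) → Evec n)) :=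
  (ContinuousLinearMap.fst ℝ _ _).prod
    (ContinuousLinearMap.pi (fun i : Fin (k+1) => pr2 n ⟨(i : ℕ), by have := i.isLt; omega⟩))

lemma extendL_eq (h : k + 1 ≤ 2*k) (L : ℝ × (Fin (k+1) → Evec n) → ℝ) :
    extendL h L = L ∘ (trC n k h) := rfl

lemma contDiff_F (h : k + 1 ≤ 2*k) {L : ℝ × (Fin (k+1) → Evec n) → ℝ} (hL : ContDiff ℝ ∞ L) :
    ContDiff ℝ ∞ (extendL h L) := by
  rw [extendL_eq]
  exact hL.comp (trC n k h).contDiff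

lemma dep_F (h : k + 1 ≤ 2*k) (L : ℝ × (Fin (k+1) → Evec n) → ℝ) :
    Dep k (extendL h L) := by
  intro x
  show L _ = L _
  congr 1
  refine Prod.ext (by rw [Pm_apply]) ?_
  show (fun i : Fin (k+1) => x.2 ⟨(i : ℕ), _⟩) =
    (fun i : Fin (k+1) => (Pm n k x).2 ⟨(i : ℕ), _⟩)
  funext i
  rw [Pm_apply]
  have : ((⟨(i : ℕ), by have := i.isLt; omega⟩ : Fin (2*k)) : ℕ) ≤ k := by
    simp only [Fin.val_mk]; have := i.isLt; omega
  simp [this]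

lemma Dep.pg_dep {N m : ℕ} {g : ℝ × (Fin N → Evec n) → ℝ} (hd : Differentiable ℝ g)
    (hg : Dep m g) {j : Fin N} (hj : (j : ℕ) ≤ m) : Dep m (pg g j) := by
  intro x
  show (WithLp.equiv 2 _).symm _ = (WithLp.equiv 2 _).symm _
  congr 1
  funext A
  rw [hg.fderiv_eq hd x, ContinuousLinearMap.comp_apply, Pm_inc_of_le hj]

variable (h2 : k + 1 ≤ 2*k) {L : ℝ × (Fin (k+1) → Evec n) → ℝ} (hL : ContDiff ℝ ∞ L)
variable (r : ℕ) (hr1 : 1 ≤ r) (hrk : r ≤ k)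

include hL hr1 hrk

lemma hatP_eq :
    hatP h2 L r hr1 hrk = fun x => ∑ i : Fin (k - r + 1),
      ((-1:ℝ)^(i : ℕ)) •
        (dT^[(i : ℕ)] (pg (extendL h2 L)
          ⟨r + (i : ℕ), by have := i.isLt; omega⟩)) x := by
  have hd : Differentiable ℝ (extendL h2 L) := (contDiff_F h2 hL).differentiable (by simp)
  funext x
  unfold hatP
  simp only [pgradN_eq hd]

lemma term_smooth (i : Fin (k - r + 1)) :
    ContDiff ℝ ∞ (dT^[(i : ℕ)] (pg (extendL h2 L)
      (⟨r + (i : ℕ), by have := i.isLt; omega⟩ : Fin (2*k)))) := by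
  have hF := contDiff_F h2 hL
  have hj : ((⟨r + (i : ℕ), by have := i.isLt; omega⟩ : Fin (2*k)) : ℕ) ≤ k := by
    simp only [Fin.val_mk]; have := i.isLt; omega
  have := iter (contDiff_pg hF _) ((dep_F h2 L).pg_dep (hF.differentiable (by simp)) hj)
    (i : ℕ) (by have := i.isLt; omega)
  exact this.1

lemma term_dep (i : Fin (k - r + 1)) :
    Dep (k + (i : ℕ)) (dT^[(i : ℕ)] (pg (extendL h2 L)
      (⟨r + (i : ℕ), by have := i.isLt; omega⟩ : Fin (2*k)))) := by
  have hF := contDiff_F h2 hL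
  have hj : ((⟨r + (i : ℕ), by have := i.isLt; omega⟩ : Fin (2*k)) : ℕ) ≤ k := by
    simp only [Fin.val_mk]; have := i.isLt; omega
  have := iter (contDiff_pg hF _) ((dep_F h2 L).pg_dep (hF.differentiable (by simp)) hj)
    (i : ℕ) (by have := i.isLt; omega)
  exact this.2.1

lemma contDiff_hatP : ContDiff ℝ ∞ (hatP h2 L r hr1 hrk) := by
  rw [hatP_eq h2 hL r hr1 hrk]
  exact ContDiff.sum fun i _ => (term_smooth h2 hL r hr1 hrk i).const_smul _

lemma dep_hatP : Dep (2*k - r) (hatP h2 L r hr1 hrk) := by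
  rw [hatP_eq h2 hL r hr1 hrk]
  intro x
  refine Finset.sum_congr rfl fun i _ => ?_
  congr 1
  exact ((term_dep h2 hL r hr1 hrk i).mono (by have := i.isLt; omega)) x

lemma diag_hatP (x : ℝ × (Fin (2*k) → Evec n)) (u : Evec n) :
    fderiv ℝ (hatP h2 L r hr1 hrk) x (inc n ⟨2*k - r, by omega⟩ u) =
      ((-1:ℝ)^(k - r)) •
        fderiv ℝ (pg (extendL h2 L) ⟨k, by omega⟩) (Pm n k x) (inc n ⟨k, by omega⟩ u) := by
  have hF := contDiff_F h2 hL
  rw [hatP_eq h2 hL r hr1 hrk]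
  rw [fderiv_fun_sum (fun i _ =>
    (((term_smooth h2 hL r hr1 hrk i).const_smul ((-1:ℝ)^(i : ℕ))).differentiable (by simp)).differentiableAt)]
  rw [ContinuousLinearMap.sum_apply]
  rw [Finset.sum_eq_single_of_mem (⟨k - r, by omega⟩ : Fin (k - r + 1)) (Finset.mem_univ _)]
  · rw [fderiv_fun_const_smul ((term_smooth h2 hL r hr1 hrk _).differentiable (by simp)).differentiableAt]
    rw [ContinuousLinearMap.smul_apply]
    congr 1
    have hj : ((⟨r + (k - r), by omega⟩ : Fin (2*k)) : ℕ) ≤ k := by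
      simp only [Fin.val_mk]; omega
    have hDep := (dep_F h2 L).pg_dep (hF.differentiable (by simp)) hj
    have hit := (iter (contDiff_pg hF _) hDep (k - r) (by omega)).2.2 x u
    have e1 : (⟨r + (k - r), by omega⟩ : Fin (2*k)) = ⟨k, by omega⟩ := by
      ext; simp only [Fin.val_mk]; omega
    have e2 : (⟨2*k - r, by omega⟩ : Fin (2*k)) = ⟨k + (k - r), by omega⟩ := by
      ext; simp only [Fin.val_mk]; omega
    simp only [Fin.val_mk]
    rw [e2, e1]
    rw [e1] at hit
    exact hit
  · intro b _ hb
    have hb' : (b : ℕ) < k - r := by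
      have := b.isLt
      rcases Nat.lt_or_ge (b : ℕ) (k - r) with h | h
      · exact h
      · exfalso; exact hb (by ext; simp only [Fin.val_mk]; omega)
    rw [fderiv_fun_const_smul ((term_smooth h2 hL r hr1 hrk b).differentiable (by simp)).differentiableAt]
    rw [ContinuousLinearMap.smul_apply]
    have hz := ((term_dep h2 hL r hr1 hrk b).fderiv_inc_zero
      ((term_smooth h2 hL r hr1 hrk b).differentiable (by simp))
      (show k + (b : ℕ) < ((⟨2*k - r, by omega⟩ : Fin (2*k)) : ℕ) by
        simp only [Fin.val_mk]; omega) x u)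
    rw [hz, smul_zero]

end HatPAnalysis

section Entries

variable {n k : ℕ}

lemma gradient_coord (g : Evec n → ℝ) (v : Evec n) (A : Fin n) :
    gradient g v A = fderiv ℝ g v (EuclideanSpace.single A 1) := by
  have h1 : gradient g v A = ⟪gradient g v, EuclideanSpace.single A 1⟫ := by
    rw [EuclideanSpace.inner_single_right]; simp
  rw [h1, gradient, InnerProductSpace.toDual_symm_apply]

variable (h2 : k + 1 ≤ 2*k) {L : ℝ × (Fin (k+1) → Evec n) → ℝ} (hL : ContDiff ℝ ∞ L)
  (hk : 1 ≤ k) (w : ℝ × (Fin (2*k) → Evec n))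

include hL

lemma hess_entry (A B : Fin n) :
    hessQk L (truncK hk w) A B =
      (fderiv ℝ (fderiv ℝ (extendL h2 L)) w
          (inc n ⟨k, by omega⟩ (EuclideanSpace.single B 1)))
        (inc n ⟨k, by omega⟩ (EuclideanSpace.single A 1)) := by
  have hF := contDiff_F h2 hL
  have hdF : Differentiable ℝ (extendL h2 L) := hF.differentiable (by simp)
  set K : Fin (2*k) := ⟨k, by omega⟩ with hK
  set eA := (EuclideanSpace.single A 1 : Evec n) with heA
  set eB := (EuclideanSpace.single B 1 : Evec n) with heB
  set G : ℝ × (Fin (2*k) → Evec n) → ℝ :=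
    fun x => fderiv ℝ (extendL h2 L) x (inc n K eA) with hG
  have hGdiff : Differentiable ℝ G :=
    ((contDiff_fderiv hF).clm_apply contDiff_const).differentiable (by simp)
  have hsec : (fun w' => L ((truncK hk w).1, Function.update (truncK hk w).2 (Fin.last k) w'))
      = fun v' => (extendL h2 L) ((w.1, Function.update w.2 K v')) := by
    funext v'
    show L _ = L _
    congr 1
    refine Prod.ext rfl ?_
    funext i
    show Function.update (truncK hk w).2 (Fin.last k) v' i =
      (Function.update w.2 K v') ⟨(i : ℕ), by have := i.isLt; omega⟩
    by_cases hi : i = Fin.last k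
    · subst hi
      rw [Function.update_self]
      have e : (⟨((Fin.last k : Fin (k+1)) : ℕ), by have := (Fin.last k).isLt; omega⟩ :
          Fin (2*k)) = K := by
        ext; simp [hK]
      rw [e, Function.update_self]
    · have hiv : (i : ℕ) ≠ k := by
        intro hc; exact hi (by ext; simpa using hc)
      have e : (⟨(i : ℕ), by have := i.isLt; omega⟩ : Fin (2*k)) ≠ K := by
        intro hc
        apply hiv
        have := congrArg Fin.val hc
        simpa [hK] using this
      rw [Function.update_of_ne hi, Function.update_of_ne e]
      rfl
  have hstep2 : ∀ v, fderiv ℝ (fun v' => (extendL h2 L) ((w.1, Function.update w.2 K v'))) v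
      = (fderiv ℝ (extendL h2 L) ((w.1, Function.update w.2 K v))).comp (inc n K) := by
    intro v
    exact ((hdF ((w.1, Function.update w.2 K v))).hasFDerivAt.comp v
      (hasFDerivAt_sect w K v)).fderiv
  have hstep1 : (fun v => gradient
      (fun w' => L ((truncK hk w).1, Function.update (truncK hk w).2 (Fin.last k) w')) v A)
      = fun v => G ((w.1, Function.update w.2 K v)) := by
    funext v
    rw [gradient_coord, hsec, hstep2 v]
    rfl
  show fderiv ℝ (fun v => gradient
      (fun w' => L ((truncK hk w).1, Function.update (truncK hk w).2 (Fin.last k) w')) v A)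
      ((truncK hk w).2 (Fin.last k)) eB = _
  rw [hstep1]
  have hpt : ((w.1, Function.update w.2 K ((truncK hk w).2 (Fin.last k))) :
      ℝ × (Fin (2*k) → Evec n)) = w := by
    have e : (truncK hk w).2 (Fin.last k) = w.2 K := rfl
    rw [e, Function.update_eq_self]
  have hGat : HasFDerivAt G (fderiv ℝ G w)
      ((fun v : Evec n => ((w.1, Function.update w.2 K v) : ℝ × (Fin (2*k) → Evec n)))
        ((truncK hk w).2 (Fin.last k))) := by
    show HasFDerivAt G (fderiv ℝ G w)
      ((w.1, Function.update w.2 K ((truncK hk w).2 (Fin.last k))))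
    rw [hpt]
    exact (hGdiff w).hasFDerivAt
  have hcomp : fderiv ℝ (fun v => G ((w.1, Function.update w.2 K v)))
      ((truncK hk w).2 (Fin.last k)) = (fderiv ℝ G w).comp (inc n K) := by
    have := (hGat.comp ((truncK hk w).2 (Fin.last k))
      (hasFDerivAt_sect w K ((truncK hk w).2 (Fin.last k)))).fderiv
    exact this
  rw [hcomp, ContinuousLinearMap.comp_apply]
  exact fderiv_clm_apply_const ((contDiff_fderiv hF).differentiable (by simp)) w
    (inc n K eB) (inc n K eA)

lemma pg_diag (A B : Fin n) :
    (fderiv ℝ (pg (extendL h2 L) ⟨k, by omega⟩) (Pm n k w)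
        (inc n ⟨k, by omega⟩ (EuclideanSpace.single B 1))) A =
      (fderiv ℝ (fderiv ℝ (extendL h2 L)) w
          (inc n ⟨k, by omega⟩ (EuclideanSpace.single B 1)))
        (inc n ⟨k, by omega⟩ (EuclideanSpace.single A 1)) := by
  have hF := contDiff_F h2 hL
  have hdF : Differentiable ℝ (extendL h2 L) := hF.differentiable (by simp)
  set K : Fin (2*k) := ⟨k, by omega⟩ with hK
  set eA := (EuclideanSpace.single A 1 : Evec n) with heA
  set eB := (EuclideanSpace.single B 1 : Evec n) with heB
  have hpg := contDiff_pg hF K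
  rw [← fderiv_coord (hpg.differentiable (by simp)) (Pm n k w) (inc n K eB) A]
  have he : (fun x => pg (extendL h2 L) K x A) =
      fun x => fderiv ℝ (extendL h2 L) x (inc n K eA) := rfl
  rw [he]
  set G : ℝ × (Fin (2*k) → Evec n) → ℝ :=
    fun x => fderiv ℝ (extendL h2 L) x (inc n K eA) with hG
  have hGdiff : Differentiable ℝ G :=
    ((contDiff_fderiv hF).clm_apply contDiff_const).differentiable (by simp)
  have hKk : (K : ℕ) ≤ k := le_refl k
  have hGdep : Dep k G := by
    intro x
    show fderiv ℝ (extendL h2 L) x (inc n K eA) = fderiv ℝ (extendL h2 L) (Pm n k x) (inc n K eA)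
    rw [(dep_F h2 L).fderiv_eq hdF x, ContinuousLinearMap.comp_apply, Pm_inc_of_le hKk]
  have h1 : fderiv ℝ G w (inc n K eB) = fderiv ℝ G (Pm n k w) (inc n K eB) := by
    rw [hGdep.fderiv_eq hGdiff w, ContinuousLinearMap.comp_apply, Pm_inc_of_le hKk]
  rw [← h1]
  exact fderiv_clm_apply_const ((contDiff_fderiv hF).differentiable (by simp)) w
    (inc n K eB) (inc n K eA)

lemma hatP_diag_entry (r : ℕ) (hr1 : 1 ≤ r) (hrk : r ≤ k) (A B : Fin n) :
    (fderiv ℝ (hatP h2 L r hr1 hrk) w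
        (inc n ⟨2*k - r, by omega⟩ (EuclideanSpace.single B 1))) A =
      ((-1:ℝ)^(k - r)) * hessQk L (truncK hk w) A B := by
  rw [diag_hatP h2 hL r hr1 hrk w (EuclideanSpace.single B 1)]
  rw [hess_entry h2 hL hk w A B, ← pg_diag h2 hL w A B]
  rfl

end Entries

section FL

variable {n k : ℕ}

/-- The candidate derivative of `legendreFL` at `w`. -/
def TFL (hk : 1 ≤ k) (L : ℝ × (Fin (k+1) → Evec n) → ℝ) (w : ℝ × (Fin (2*k) → Evec n)) :
    (ℝ × (Fin (2*k) → Evec n)) →L[ℝ] ℝ × (Fin (2*k) → Evec n) :=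
  (ContinuousLinearMap.fst ℝ _ _).prod
    (ContinuousLinearMap.pi fun j : Fin (2*k) =>
      if h : (j : ℕ) < k then pr2 n j
      else fderiv ℝ (hatP (by omega) L ((j : ℕ) - k + 1) (by omega)
        (by have := j.isLt; omega)) w)

variable (hk : 1 ≤ k) {L : ℝ × (Fin (k+1) → Evec n) → ℝ} (hL : ContDiff ℝ ∞ L)
  (w : ℝ × (Fin (2*k) → Evec n))

include hL

lemma hasFDerivAt_FL : HasFDerivAt (legendreFL hk L) (TFL hk L w) w := by
  refine HasFDerivAt.prodMk
    ((ContinuousLinearMap.fst ℝ ℝ (Fin (2*k) → Evec n)).hasFDerivAt) ?_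
  rw [hasFDerivAt_pi']
  intro j
  rw [ContinuousLinearMap.proj_pi]
  by_cases hj : (j : ℕ) < k
  · simp only [legendreFL, dif_pos hj]
    exact (pr2 n j).hasFDerivAt
  · simp only [legendreFL, dif_neg hj]
    exact ((contDiff_hatP (by omega) hL _ (by omega)
      (by have := j.isLt; omega)).differentiable (by simp) w).hasFDerivAt

lemma fderiv_FL : fderiv ℝ (legendreFL hk L) w = TFL hk L w :=
  (hasFDerivAt_FL hk hL w).fderiv

lemma TFL_fst (x : ℝ × (Fin (2*k) → Evec n)) : (TFL hk L w x).1 = x.1 := rfl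

lemma TFL_low (x : ℝ × (Fin (2*k) → Evec n)) (j : Fin (2*k)) (hj : (j : ℕ) < k) :
    (TFL hk L w x).2 j = x.2 j := by
  simp only [TFL, ContinuousLinearMap.prod_apply, ContinuousLinearMap.pi_apply, dif_pos hj]
  rfl

lemma TFL_high (x : ℝ × (Fin (2*k) → Evec n)) (j : Fin (2*k)) (hj : ¬ (j : ℕ) < k) :
    (TFL hk L w x).2 j = fderiv ℝ (hatP (by omega) L ((j : ℕ) - k + 1) (by omega)
      (by have := j.isLt; omega)) w x := by
  simp only [TFL, ContinuousLinearMap.prod_apply, ContinuousLinearMap.pi_apply, dif_neg hj]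

lemma TFL_vanish (i j : Fin (2*k)) (u : Evec n) (hj : ¬ (j : ℕ) < k)
    (hij : 3*k ≤ (i : ℕ) + (j : ℕ)) :
    (TFL hk L w (inc n i u)).2 j = 0 := by
  rw [TFL_high hk hL w _ j hj]
  exact (dep_hatP (by omega) hL ((j : ℕ) - k + 1) (by omega)
      (by have := j.isLt; omega)).fderiv_inc_zero
    ((contDiff_hatP (by omega) hL _ (by omega)
      (by have := j.isLt; omega)).differentiable (by simp))
    (show 2*k - ((j : ℕ) - k + 1) < (i : ℕ) by have := i.isLt; have := j.isLt; omega) w u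

lemma TFL_diag (j : Fin (2*k)) (hj : ¬ (j : ℕ) < k) (A B : Fin n) :
    (TFL hk L w (inc n ⟨3*k - 1 - (j : ℕ), by have := j.isLt; omega⟩
        (EuclideanSpace.single B 1))).2 j A =
      ((-1:ℝ)^(k - ((j : ℕ) - k + 1))) * hessQk L (truncK hk w) A B := by
  rw [TFL_high hk hL w _ j hj]
  have e : (⟨3*k - 1 - (j : ℕ), by have := j.isLt; omega⟩ : Fin (2*k)) =
      ⟨2*k - ((j : ℕ) - k + 1), by omega⟩ := by
    ext; simp only [Fin.val_mk]; have := j.isLt; omega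
  rw [e]
  exact hatP_diag_entry (by omega) hL hk w ((j : ℕ) - k + 1) (by omega)
    (by have := j.isLt; omega) A B

end FL

section DetAux

variable {n k : ℕ}

/-- Reversal of the upper half of the indices. -/
def rev (k : ℕ) (j : Fin (2*k)) : Fin (2*k) :=
  if h : (j : ℕ) < k then j else ⟨3*k - 1 - (j : ℕ), by have := j.isLt; omega⟩

lemma rev_low {j : Fin (2*k)} (hj : (j : ℕ) < k) : rev k j = j := dif_pos hj

lemma rev_high_val {j : Fin (2*k)} (hj : ¬ (j : ℕ) < k) :
    ((rev k j : Fin (2*k)) : ℕ) = 3*k - 1 - (j : ℕ) := by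
  rw [rev, dif_neg hj]

lemma rev_high_ge {j : Fin (2*k)} (hj : ¬ (j : ℕ) < k) : ¬ ((rev k j : Fin (2*k)) : ℕ) < k := by
  rw [rev_high_val hj]
  have := j.isLt
  omega

lemma rev_rev (j : Fin (2*k)) : rev k (rev k j) = j := by
  by_cases hj : (j : ℕ) < k
  · rw [rev_low hj, rev_low hj]
  · have h1 := rev_high_ge hj
    ext
    rw [rev_high_val h1, rev_high_val hj]
    have := j.isLt
    omega

/-- The reversal as a linear automorphism of `ℝ × (ℝⁿ)^{2k}`. -/
def Rl (n k : ℕ) : (ℝ × (Fin (2*k) → Evec n)) →ₗ[ℝ] ℝ × (Fin (2*k) → Evec n) :=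
  LinearMap.prod (LinearMap.fst ℝ ℝ _)
    ((LinearMap.funLeft ℝ (Evec n) (rev k)).comp (LinearMap.snd ℝ ℝ _))

lemma Rl_apply (x : ℝ × (Fin (2*k) → Evec n)) :
    Rl n k x = (x.1, fun j => x.2 (rev k j)) := rfl

lemma Rl_invol : (Rl n k) ∘ₗ (Rl n k) = LinearMap.id := by
  refine LinearMap.ext fun x => ?_
  refine Prod.ext rfl (funext fun j => ?_)
  show x.2 (rev k (rev k j)) = x.2 j
  rw [rev_rev]

lemma abs_det_Rl : |LinearMap.det (Rl n k)| = 1 := by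
  have h := congrArg LinearMap.det (Rl_invol (n := n) (k := k))
  rw [LinearMap.det_comp, LinearMap.det_id] at h
  rcases mul_self_eq_one_iff.1 h with h1 | h1 <;> rw [h1] <;> norm_num

/-- Index type for the basis of `ℝ × (ℝⁿ)^{2k}`. -/
abbrev iota (n k : ℕ) := Unit ⊕ (Σ _ : Fin (2*k), Fin n)

/-- The standard basis of `ℝ × (ℝⁿ)^{2k}`. -/
def bb (n k : ℕ) : Module.Basis (iota n k) ℝ (ℝ × (Fin (2*k) → Evec n)) :=
  (Module.Basis.singleton Unit ℝ).prod
    (Pi.basis fun _ : Fin (2*k) => (EuclideanSpace.basisFun (Fin n) ℝ).toBasis)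

lemma bb_repr_inl (v : ℝ × (Fin (2*k) → Evec n)) :
    (bb n k).repr v (Sum.inl ()) = v.1 := by
  rw [bb, Module.Basis.prod_repr_inl, Module.Basis.singleton_repr]

lemma bb_repr_inr (v : ℝ × (Fin (2*k) → Evec n)) (i : Fin (2*k)) (A : Fin n) :
    (bb n k).repr v (Sum.inr ⟨i, A⟩) = v.2 i A := by
  rw [bb, Module.Basis.prod_repr_inr, Pi.basis_repr]
  exact (EuclideanSpace.basisFun (Fin n) ℝ).coe_toBasis_repr_apply (v.2 i) A

lemma bb_apply_inl : bb n k (Sum.inl ()) = ((1 : ℝ), 0) := by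
  rw [bb, Module.Basis.prod_apply]
  simp

lemma bb_apply_inr (j : Fin (2*k)) (B : Fin n) :
    bb n k (Sum.inr ⟨j, B⟩) = (0, Pi.single j (EuclideanSpace.single B 1)) := by
  rw [bb, Module.Basis.prod_apply]
  simp [Pi.basis_apply]

/-- The weight function for block-triangularity. -/
def om (n k : ℕ) : iota n k → ℕ := Sum.elim (fun _ => 0) (fun p => (p.1 : ℕ) + 1)

theorem det_aux (hn : 1 ≤ n) (hk : 1 ≤ k)
    (T : (ℝ × (Fin (2*k) → Evec n)) →ₗ[ℝ] ℝ × (Fin (2*k) → Evec n)) (D : ℝ)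
    (h1 : ∀ x, (T x).1 = x.1)
    (h2 : ∀ x (j : Fin (2*k)), (j : ℕ) < k → (T x).2 j = x.2 j)
    (h3 : ∀ (i j : Fin (2*k)) (u : Evec n), ¬ (j : ℕ) < k → 3*k ≤ (i : ℕ) + (j : ℕ) →
      (T (0, Pi.single i u)).2 j = 0)
    (h4 : ∀ (j : Fin (2*k)), ¬ (j : ℕ) < k →
      |Matrix.det (Matrix.of fun A B : Fin n =>
        (T (0, Pi.single (rev k j) (EuclideanSpace.single B 1))).2 j A)| = D) :
    |LinearMap.det T| = D ^ k := by
  classical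
  have hdet : |LinearMap.det T| = |LinearMap.det ((Rl n k) ∘ₗ T)| := by
    rw [LinearMap.det_comp, abs_mul, abs_det_Rl, one_mul]
  rw [hdet]
  set M := LinearMap.toMatrix (bb n k) (bb n k) ((Rl n k) ∘ₗ T) with hM
  rw [← LinearMap.det_toMatrix (bb n k), ← hM]
  -- entries of M
  have M_t_t : M (Sum.inl ()) (Sum.inl ()) = 1 := by
    rw [hM, LinearMap.toMatrix_apply, bb_apply_inl, bb_repr_inl]
    show (T ((1:ℝ), 0)).1 = 1
    rw [h1]
  have M_t_q : ∀ (j : Fin (2*k)) (B : Fin n),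
      M (Sum.inl ()) (Sum.inr ⟨j, B⟩) = 0 := by
    intro j B
    rw [hM, LinearMap.toMatrix_apply, bb_apply_inr, bb_repr_inl]
    show (T (0, Pi.single j (EuclideanSpace.single B 1))).1 = 0
    rw [h1]
  have M_q_t : ∀ (i : Fin (2*k)) (A : Fin n),
      M (Sum.inr ⟨i, A⟩) (Sum.inl ()) = (T ((1:ℝ), 0)).2 (rev k i) A := by
    intro i A
    rw [hM, LinearMap.toMatrix_apply, bb_apply_inl, bb_repr_inr]
    rfl
  have M_q_q : ∀ (i j : Fin (2*k)) (A B : Fin n),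
      M (Sum.inr ⟨i, A⟩) (Sum.inr ⟨j, B⟩) =
        (T (0, Pi.single j (EuclideanSpace.single B 1))).2 (rev k i) A := by
    intro i j A B
    rw [hM, LinearMap.toMatrix_apply, bb_apply_inr, bb_repr_inr]
    rfl
  -- block triangularity of the transpose
  have hBT : M.transpose.BlockTriangular (om n k) := by
    intro p q hlt
    show M q p = 0
    rcases q with _ | ⟨j', A⟩
    · rcases p with _ | ⟨i', B⟩
      · exact absurd hlt (lt_irrefl _)
      · exact M_t_q i' B
    · rcases p with _ | ⟨i', B⟩
      · exact absurd hlt (by simp [om])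
      · have hij : (j' : ℕ) < (i' : ℕ) := by
          simpa [om] using hlt
        rw [M_q_q]
        by_cases hj' : (j' : ℕ) < k
        · rw [rev_low hj', h2 _ _ hj']
          have hne : i' ≠ j' := by
            intro hc; subst hc; exact lt_irrefl _ hij
          show (Pi.single i' (EuclideanSpace.single B (1:ℝ)) : Fin (2*k) → Evec n) j' A = 0
          rw [Pi.single_eq_of_ne (Ne.symm hne)]
          rfl
        · rw [h3 i' (rev k j') _ (rev_high_ge hj')
            (by rw [rev_high_val hj']; have := j'.isLt; omega)]
          rfl
  have hdetM : M.det = M.transpose.det := (Matrix.det_transpose M).symm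
  rw [hdetM, hBT.det]
  -- the image of the weight function
  have him : Finset.image (om n k) Finset.univ =
      insert 0 (Finset.image (fun j : Fin (2*k) => (j : ℕ) + 1) Finset.univ) := by
    apply Finset.ext
    intro a
    simp only [Finset.mem_image, Finset.mem_insert, Finset.mem_univ, true_and]
    constructor
    · rintro ⟨p, rfl⟩
      rcases p with _ | ⟨j, A⟩
      · left; rfl
      · right; exact ⟨j, rfl⟩
    · rintro (rfl | ⟨j, rfl⟩)
      · exact ⟨Sum.inl (), rfl⟩
      · exact ⟨Sum.inr ⟨j, ⟨0, hn⟩⟩, rfl⟩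
  rw [him]
  rw [Finset.prod_insert (by simp)]
  rw [Finset.prod_image (fun x _ y _ h => by
    have : (x : ℕ) = (y : ℕ) := by omega
    exact Fin.ext this)]
  -- block at 0
  have hblock0 : (M.transpose.toSquareBlock (om n k) 0).det = 1 := by
    letI : Unique {p // om n k p = 0} :=
      { default := ⟨Sum.inl (), rfl⟩
        uniq := by
          rintro ⟨(u | ⟨j, A⟩), hp⟩
          · rfl
          · exact absurd hp (by simp [om]) }
    rw [Matrix.det_unique, Matrix.toSquareBlock_def]
    exact M_t_t
  rw [hblock0, one_mul]
  -- blocks at j+1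
  have hblock : ∀ j : Fin (2*k), |(M.transpose.toSquareBlock (om n k) ((j : ℕ) + 1)).det| =
      if (j : ℕ) < k then 1 else D := by
    intro j
    let f : Fin n → {p // om n k p = (j : ℕ) + 1} := fun A => ⟨Sum.inr ⟨j, A⟩, rfl⟩
    have hbij : Function.Bijective f := by
      constructor
      · intro A B hAB
        have := congrArg Subtype.val hAB
        simpa [f] using this
      · rintro ⟨(u | ⟨j', A⟩), hp⟩
        · exact absurd hp (by simp [om])
        · have hv : (j' : ℕ) + 1 = (j : ℕ) + 1 := by simpa [om] using hp
          have hj' : j' = j := Fin.ext (by omega)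
          subst hj'
          exact ⟨A, rfl⟩
    let e : Fin n ≃ {p // om n k p = (j : ℕ) + 1} := Equiv.ofBijective f hbij
    have hdet2 : (M.transpose.toSquareBlock (om n k) ((j : ℕ) + 1)).det =
        ((M.transpose.toSquareBlock (om n k) ((j : ℕ) + 1)).submatrix e e).det :=
      (Matrix.det_submatrix_equiv_self e _).symm
    have hentry : ∀ A B : Fin n,
        ((M.transpose.toSquareBlock (om n k) ((j : ℕ) + 1)).submatrix e e) A B =
          (T (0, Pi.single j (EuclideanSpace.single A 1))).2 (rev k j) B := by
      intro A B
      have h8 : ((M.transpose.toSquareBlock (om n k) ((j : ℕ) + 1)).submatrix e e) A B =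
          M (Sum.inr ⟨j, B⟩) (Sum.inr ⟨j, A⟩) := by
        rw [Matrix.toSquareBlock_def]
        show M.transpose ((e A : {p // om n k p = (j : ℕ) + 1}) : iota n k)
          ((e B : {p // om n k p = (j : ℕ) + 1}) : iota n k) = _
        have eA : ((e A : {p // om n k p = (j : ℕ) + 1}) : iota n k) = Sum.inr ⟨j, A⟩ := rfl
        have eB : ((e B : {p // om n k p = (j : ℕ) + 1}) : iota n k) = Sum.inr ⟨j, B⟩ := rfl
        rw [eA, eB]
        rfl
      rw [h8, M_q_q]
    by_cases hj : (j : ℕ) < k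
    · rw [if_pos hj, hdet2]
      have : ((M.transpose.toSquareBlock (om n k) ((j : ℕ) + 1)).submatrix e e) = 1 := by
        apply Matrix.ext
        intro A B
        rw [hentry A B, rev_low hj, h2 _ _ hj]
        show (Pi.single j (EuclideanSpace.single A (1:ℝ)) : Fin (2*k) → Evec n) j B =
          (1 : Matrix (Fin n) (Fin n) ℝ) A B
        rw [Pi.single_eq_same, EuclideanSpace.single_apply, Matrix.one_apply]
        by_cases hAB : B = A
        · subst hAB; simp
        · simp [hAB, Ne.symm hAB]
      rw [this, Matrix.det_one, abs_one]
    · rw [if_neg hj, hdet2]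
      have hrr : rev k (rev k j) = j := rev_rev j
      have hb : ((M.transpose.toSquareBlock (om n k) ((j : ℕ) + 1)).submatrix e e) =
          (Matrix.of fun A B : Fin n =>
            (T (0, Pi.single (rev k (rev k j))
              (EuclideanSpace.single B 1))).2 (rev k j) A).transpose := by
        apply Matrix.ext
        intro A B
        rw [hentry A B]
        show _ = (T (0, Pi.single (rev k (rev k j)) (EuclideanSpace.single A 1))).2 (rev k j) B
        rw [hrr]
      rw [hb, Matrix.det_transpose]
      exact h4 (rev k j) (rev_high_ge hj)
  -- assemble the product
  rw [Finset.abs_prod]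
  rw [Finset.prod_congr rfl (fun j _ => hblock j)]
  rw [Finset.prod_ite]
  rw [Finset.prod_const_one, one_mul, Finset.prod_const]
  have hcard : (Finset.univ.filter (fun j : Fin (2*k) => ¬ (j : ℕ) < k)).card = k := by
    have e : {j : Fin (2*k) // ¬ ((j : ℕ) < k)} ≃ Fin k := by
      refine Equiv.ofBijective
        (fun p => ⟨(p.1 : ℕ) - k, by have := p.1.isLt; have := p.2; omega⟩) ⟨?_, ?_⟩
      · rintro ⟨a, ha⟩ ⟨b, hb⟩ hab
        have h5 : (a : ℕ) - k = (b : ℕ) - k := by simpa using congrArg Fin.val hab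
        have h6 : (a : ℕ) = (b : ℕ) := by omega
        exact Subtype.ext (Fin.ext h6)
      · intro i
        refine ⟨⟨⟨k + (i : ℕ), by have := i.isLt; omega⟩,
          by simp only [Fin.val_mk]; omega⟩, ?_⟩
        apply Fin.ext
        simp only [Fin.val_mk]
        omega
    have h7 : Fintype.card {j : Fin (2*k) // ¬ ((j : ℕ) < k)} = k := by
      rw [Fintype.card_congr e, Fintype.card_fin]
    rw [Fintype.card_subtype] at h7
    exact h7
  rw [hcard]

end DetAux

end S3

/-- For every point `w = (t, q_0, …, q_{2k-1})`, the Jacobian determinant of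
the restricted Legendre–Ostrogradsky map `FL` at `w` satisfies
`|det D(FL)(w)| = |det W(t, q_0, …, q_k)|^k`, where `W` is the Hessian of `L` in `q_k`. -/
theorem stmt3 (n k : ℕ) (hn : 1 ≤ n) (hk : 1 ≤ k)
    (L : ℝ × (Fin (k+1) → Evec n) → ℝ) (hL : ContDiff ℝ ∞ L)
    (w : ℝ × (Fin (2*k) → Evec n)) :
    |LinearMap.det ((fderiv ℝ (legendreFL hk L) w).toLinearMap)| =
      |(hessQk L (truncK hk w)).det| ^ k := by
  rw [S3.fderiv_FL hk hL w]
  refine S3.det_aux hn hk ((S3.TFL hk L w).toLinearMap) _ ?_ ?_ ?_ ?_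
  · intro x
    exact S3.TFL_fst hk hL w x
  · intro x j hj
    exact S3.TFL_low hk hL w x j hj
  · intro i j u hj hij
    have h := S3.TFL_vanish hk hL w i j u hj hij
    rw [S3.inc_apply] at h
    exact h
  · intro j hj
    have hrev : S3.rev k j = ⟨3*k - 1 - (j : ℕ), by have := j.isLt; omega⟩ :=
      Fin.ext (by rw [S3.rev_high_val hj])
    have hmat : (Matrix.of fun A B : Fin n =>
        ((S3.TFL hk L w).toLinearMap
          (0, Pi.single (S3.rev k j) (EuclideanSpace.single B 1))).2 j A) =
        ((-1:ℝ)^(k - ((j : ℕ) - k + 1))) • hessQk L (truncK hk w) := by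
      apply Matrix.ext
      intro A B
      have hD := S3.TFL_diag hk hL w j hj A B
      rw [S3.inc_apply] at hD
      show ((S3.TFL hk L w)
          (0, Pi.single (S3.rev k j) (EuclideanSpace.single B 1))).2 j A = _
      rw [hrev]
      rw [hD]
      rfl
    rw [hmat, Matrix.det_smul, Fintype.card_fin, abs_mul, abs_pow, abs_pow, abs_neg, abs_one,
      one_pow, one_pow, one_mul]
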